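/- Let j ≥ 2 and f ∈ C²[0,1] with f'(x) ≥ 0 and x f''(x) − (j−1) f'(x) ≥ 0 for all x ∈ [0,1]. Then f ≤ B_{n,j} f ≤ B_n f pointwise on [0,1] for every n ≥ j. -/

import Mathlib

open Set Finset

/-- Bernstein basis polynomial `p_{n,k}(x) = C(n,k) x^k (1-x)^{n-k}`. -/
noncomputable def bp (n k : ℕ) (x : ℝ) : ℝ :=
  (n.choose k : ℝ) * x ^ k * (1 - x) ^ (n - k)

/-- AKR node `t_{n,k}^j = (k(k-1)⋯(k-j+1)/(n(n-1)⋯(n-j+1)))^{1/j}`. -/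
noncomputable def akrNode (n j k : ℕ) : ℝ :=
  ((∏ i ∈ Finset.range j, ((k : ℝ) - i)) / (∏ i ∈ Finset.range j, ((n : ℝ) - i))) ^ ((j : ℝ)⁻¹)

/-- Classical Bernstein operator. -/
noncomputable def bern (n : ℕ) (f : ℝ → ℝ) (x : ℝ) : ℝ :=
  ∑ k ∈ Finset.range (n + 1), f ((k : ℝ) / n) * bp n k x

/-- Aldaz–Kounchev–Render operator. -/
noncomputable def akr (n j : ℕ) (f : ℝ → ℝ) (x : ℝ) : ℝ :=
  ∑ k ∈ Finset.range (n + 1), f (akrNode n j k) * bp n k x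

/-- Bivariate tensor-product Bernstein operator. -/
noncomputable def bern2 (n m : ℕ) (f : ℝ → ℝ → ℝ) (x y : ℝ) : ℝ :=
  ∑ i ∈ Finset.range (n + 1), ∑ k ∈ Finset.range (m + 1),
    f ((i : ℝ) / n) ((k : ℝ) / m) * bp n i x * bp m k y

/-- Bivariate tensor-product AKR operator. -/
noncomputable def akr2 (n m j : ℕ) (f : ℝ → ℝ → ℝ) (x y : ℝ) : ℝ :=
  ∑ i ∈ Finset.range (n + 1), ∑ k ∈ Finset.range (m + 1),
    f (akrNode n j i) (akrNode m j k) * bp n i x * bp m k y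

noncomputable def cnd (n j k : ℕ) : ℝ :=
  (∏ i ∈ Finset.range j, ((k : ℝ) - i)) / (∏ i ∈ Finset.range j, ((n : ℝ) - i))

lemma akrNode_eq (n j k : ℕ) : akrNode n j k = cnd n j k ^ ((j : ℝ)⁻¹) := rfl

lemma bp_nonneg {n k : ℕ} {x : ℝ} (hx : x ∈ Icc (0:ℝ) 1) : 0 ≤ bp n k x := by
  unfold bp
  have h1 : (0:ℝ) ≤ x := hx.1
  have h2 : (0:ℝ) ≤ 1 - x := by linarith [hx.2]
  positivity

lemma binom_sum (N : ℕ) (x : ℝ) :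
    ∑ m ∈ Finset.range (N + 1), (N.choose m : ℝ) * x ^ m * (1 - x) ^ (N - m) = 1 := by
  have h := add_pow x (1 - x) N
  have h2 : x + (1 - x) = 1 := by ring
  rw [h2, one_pow] at h
  conv_rhs => rw [h]
  exact Finset.sum_congr rfl fun m _ => by ring

lemma prod_cast {j m : ℕ} (h : j ≤ m) :
    ∏ i ∈ Finset.range j, ((m:ℝ) - i) = (m.descFactorial j : ℝ) := by
  rw [Nat.descFactorial_eq_prod_range, Nat.cast_prod]
  refine Finset.prod_congr rfl fun i hi => ?_
  have hij : i < j := Finset.mem_range.1 hi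
  have : i ≤ m := le_trans hij.le h
  rw [Nat.cast_sub this]

lemma prod_zero {j k : ℕ} (h : k < j) :
    ∏ i ∈ Finset.range j, ((k:ℝ) - i) = 0 :=
  Finset.prod_eq_zero (Finset.mem_range.2 h) (by simp)

lemma prod_nonneg' (j k : ℕ) : 0 ≤ ∏ i ∈ Finset.range j, ((k:ℝ) - i) := by
  rcases lt_or_ge k j with h | h
  · rw [prod_zero h]
  · rw [prod_cast h]; positivity

lemma denom_pos {j n : ℕ} (h : j ≤ n) : 0 < ∏ i ∈ Finset.range j, ((n:ℝ) - i) := by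
  refine Finset.prod_pos fun i hi => ?_
  have : i < j := Finset.mem_range.1 hi
  have : (i:ℝ) < n := by exact_mod_cast lt_of_lt_of_le this h
  linarith

lemma cnd_nonneg {n j k : ℕ} (h : j ≤ n) : 0 ≤ cnd n j k :=
  div_nonneg (prod_nonneg' j k) (denom_pos h).le

lemma cnd_le {n j k : ℕ} (hjn : j ≤ n) (hkn : k ≤ n) (hj : 1 ≤ j) :
    cnd n j k ≤ ((k:ℝ) / n) ^ j := by
  have hn0 : (0:ℝ) < n := by
    have : 0 < n := lt_of_lt_of_le hj hjn
    exact_mod_cast this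
  rcases lt_or_ge k j with h | h
  · rw [cnd, prod_zero h, zero_div]
    positivity
  · rw [cnd, ← Finset.prod_div_distrib]
    have : ((k:ℝ)/n)^j = ∏ _i ∈ Finset.range j, ((k:ℝ)/n) := by
      rw [Finset.prod_const, Finset.card_range]
    rw [this]
    refine Finset.prod_le_prod (fun i hi => ?_) (fun i hi => ?_)
    · have hij : i < j := Finset.mem_range.1 hi
      have h1 : (0:ℝ) ≤ (k:ℝ) - i := by
        have : (i:ℝ) ≤ k := by exact_mod_cast le_trans hij.le h
        linarith
      have h2 : (0:ℝ) < (n:ℝ) - i := by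
        have : (i:ℝ) < n := by exact_mod_cast lt_of_lt_of_le hij hjn
        linarith
      positivity
    · have hij : i < j := Finset.mem_range.1 hi
      have h2 : (0:ℝ) < (n:ℝ) - i := by
        have : (i:ℝ) < n := by exact_mod_cast lt_of_lt_of_le hij hjn
        linarith
      rw [div_le_div_iff₀ h2 hn0]
      have hkn' : (k:ℝ) ≤ n := by exact_mod_cast hkn
      have hi0 : (0:ℝ) ≤ i := by positivity
      nlinarith

lemma cnd_le_one {n j k : ℕ} (hjn : j ≤ n) (hkn : k ≤ n) (hj : 1 ≤ j) :
    cnd n j k ≤ 1 := by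
  refine le_trans (cnd_le hjn hkn hj) ?_
  have hn0 : (0:ℝ) < n := by
    have : 0 < n := lt_of_lt_of_le hj hjn
    exact_mod_cast this
  have : (k:ℝ)/n ≤ 1 := by
    rw [div_le_one hn0]; exact_mod_cast hkn
  exact pow_le_one₀ (by positivity) this

lemma akrNode_pow {n j k : ℕ} (hjn : j ≤ n) (hj : 1 ≤ j) :
    (akrNode n j k) ^ j = cnd n j k := by
  have hj0 : (j:ℝ) ≠ 0 := by exact_mod_cast Nat.one_le_iff_ne_zero.1 hj
  rw [akrNode_eq, ← Real.rpow_natCast (cnd n j k ^ ((j:ℝ)⁻¹)) j,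
    ← Real.rpow_mul (cnd_nonneg hjn), inv_mul_cancel₀ hj0, Real.rpow_one]

lemma akrNode_mem {n j k : ℕ} (hjn : j ≤ n) (hkn : k ≤ n) (hj : 1 ≤ j) :
    akrNode n j k ∈ Icc (0:ℝ) 1 := by
  constructor
  · exact Real.rpow_nonneg (cnd_nonneg hjn) _
  · exact Real.rpow_le_one (cnd_nonneg hjn) (cnd_le_one hjn hkn hj) (by positivity)

lemma akrNode_le {n j k : ℕ} (hjn : j ≤ n) (hkn : k ≤ n) (hj : 1 ≤ j) :
    akrNode n j k ≤ (k:ℝ) / n := by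
  have hn0 : (0:ℝ) < n := by
    have : 0 < n := lt_of_lt_of_le hj hjn
    exact_mod_cast this
  have h1 : (akrNode n j k) ^ j ≤ ((k:ℝ)/n) ^ j := by
    rw [akrNode_pow hjn hj]; exact cnd_le hjn hkn hj
  exact (pow_le_pow_iff_left₀ (akrNode_mem hjn hkn hj).1 (by positivity)
    (Nat.one_le_iff_ne_zero.1 hj)).1 h1

lemma key_nat {j k n : ℕ} (hjk : j ≤ k) (hkn : k ≤ n) :
    k.descFactorial j * n.choose k = n.descFactorial j * (n - j).choose (k - j) := by
  calc k.descFactorial j * n.choose k = Nat.factorial j * (n.choose k * k.choose j) := by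
        rw [Nat.descFactorial_eq_factorial_mul_choose]; ring
    _ = Nat.factorial j * (n.choose j * (n - j).choose (k - j)) := by rw [Nat.choose_mul hjk]
    _ = n.descFactorial j * (n - j).choose (k - j) := by
        rw [Nat.descFactorial_eq_factorial_mul_choose]; ring

lemma repro {j n : ℕ} (hjn : j ≤ n) (hj : 1 ≤ j) (x : ℝ) :
    ∑ k ∈ Finset.range (n + 1), cnd n j k * bp n k x = x ^ j := by
  have hsplit : n + 1 = j + (n + 1 - j) := by omega
  have hD : (0:ℝ) < ∏ i ∈ Finset.range j, ((n:ℝ) - i) := denom_pos hjn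
  rw [hsplit, Finset.sum_range_add]
  have h1 : ∑ i ∈ Finset.range j, cnd n j i * bp n i x = 0 := by
    refine Finset.sum_eq_zero fun i hi => ?_
    rw [cnd, prod_zero (Finset.mem_range.1 hi), zero_div, zero_mul]
  rw [h1, zero_add]
  have h2 : ∀ m ∈ Finset.range (n + 1 - j),
      cnd n j (j + m) * bp n (j + m) x
        = x ^ j * (((n - j).choose m : ℝ) * x ^ m * (1 - x) ^ (n - j - m)) := by
    intro m hm
    have hm' : m < n + 1 - j := Finset.mem_range.1 hm
    have hk : j + m ≤ n := by omega
    have hnum := prod_cast (Nat.le_add_right j m)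
    have hden := prod_cast hjn
    rw [cnd, hnum, hden, bp]
    have hkey := key_nat (Nat.le_add_right j m) hk
    have hkey' : ((j + m).descFactorial j : ℝ) * (n.choose (j + m) : ℝ)
        = (n.descFactorial j : ℝ) * ((n - j).choose m : ℝ) := by
      have hmm : j + m - j = m := by omega
      exact_mod_cast (hmm ▸ hkey)
    have hD' : (n.descFactorial j : ℝ) ≠ 0 := by rw [← hden]; exact hD.ne'
    have hpow : x ^ (j + m) = x ^ j * x ^ m := pow_add x j m
    have hsub : n - (j + m) = n - j - m := by omega
    rw [hsub, hpow]
    field_simp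
    linear_combination (x ^ j * x ^ m * (1 - x) ^ (n - j - m)) * hkey'
  have hN : n + 1 - j = (n - j) + 1 := by omega
  calc ∑ m ∈ Finset.range (n + 1 - j), cnd n j (j + m) * bp n (j + m) x
      = ∑ m ∈ Finset.range (n + 1 - j),
          x ^ j * (((n - j).choose m : ℝ) * x ^ m * (1 - x) ^ (n - j - m)) :=
        Finset.sum_congr rfl h2
    _ = x ^ j * ∑ m ∈ Finset.range ((n - j) + 1),
          ((n - j).choose m : ℝ) * x ^ m * (1 - x) ^ ((n - j) - m) := by
        rw [← Finset.mul_sum, hN]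
    _ = x ^ j := by rw [binom_sum, mul_one]

lemma convex_g {j : ℕ} (hj : 2 ≤ j) (f f' f'' : ℝ → ℝ)
    (hf' : ∀ x ∈ Icc (0:ℝ) 1, HasDerivWithinAt f (f' x) (Icc 0 1) x)
    (hf'' : ∀ x ∈ Icc (0:ℝ) 1, HasDerivWithinAt f' (f'' x) (Icc 0 1) x)
    (hconv : ∀ x ∈ Icc (0:ℝ) 1, 0 ≤ x * f'' x - ((j : ℝ) - 1) * f' x) :
    ConvexOn ℝ (Icc (0:ℝ) 1) (fun y => f (y ^ ((j:ℝ)⁻¹))) := by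
  set c : ℝ := (j:ℝ)⁻¹ with hc_def
  have hj0 : (0:ℝ) < j := by exact_mod_cast lt_of_lt_of_le two_pos hj
  have hc0 : 0 < c := by positivity
  have hcj : c * j = 1 := inv_mul_cancel₀ hj0.ne'
  have hfc : ContinuousOn f (Icc 0 1) := fun x hx => (hf' x hx).continuousWithinAt
  have hmaps : MapsTo (fun y : ℝ => y ^ c) (Icc 0 1) (Icc 0 1) := fun y hy =>
    ⟨Real.rpow_nonneg hy.1 c, Real.rpow_le_one hy.1 hy.2 hc0.le⟩
  have hgc : ContinuousOn (fun y : ℝ => f (y ^ c)) (Icc 0 1) := by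
    refine hfc.comp (fun y hy => ?_) hmaps
    exact (Real.continuousAt_rpow_const y c (Or.inr hc0.le)).continuousWithinAt
  have hint : interior (Icc (0:ℝ) 1) = Set.Ioo 0 1 := interior_Icc
  -- derivatives on the interior
  set G' : ℝ → ℝ := fun y => f' (y ^ c) * (c * y ^ (c - 1)) with hG'
  set G'' : ℝ → ℝ := fun y =>
    f'' (y ^ c) * (c * y ^ (c - 1)) * (c * y ^ (c - 1))
      + f' (y ^ c) * (c * ((c - 1) * y ^ (c - 1 - 1))) with hG''
  have hu_mem : ∀ y ∈ Ioo (0:ℝ) 1, y ^ c ∈ Ioo (0:ℝ) 1 := fun y hy =>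
    ⟨Real.rpow_pos_of_pos hy.1 c, Real.rpow_lt_one hy.1.le hy.2 hc0⟩
  have hd1 : ∀ y ∈ Ioo (0:ℝ) 1, HasDerivAt (fun y : ℝ => f (y ^ c)) (G' y) y := by
    intro y hy
    have hu := hu_mem y hy
    have hfa : HasDerivAt f (f' (y ^ c)) (y ^ c) :=
      (hf' _ (Set.Ioo_subset_Icc_self hu)).hasDerivAt (Icc_mem_nhds hu.1 hu.2)
    have hra : HasDerivAt (fun y : ℝ => y ^ c) (c * y ^ (c - 1)) y :=
      Real.hasDerivAt_rpow_const (Or.inl hy.1.ne')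
    exact hfa.comp y hra
  have hd2 : ∀ y ∈ Ioo (0:ℝ) 1, HasDerivAt G' (G'' y) y := by
    intro y hy
    have hu := hu_mem y hy
    have hfa : HasDerivAt f' (f'' (y ^ c)) (y ^ c) :=
      (hf'' _ (Set.Ioo_subset_Icc_self hu)).hasDerivAt (Icc_mem_nhds hu.1 hu.2)
    have hra : HasDerivAt (fun y : ℝ => y ^ c) (c * y ^ (c - 1)) y :=
      Real.hasDerivAt_rpow_const (Or.inl hy.1.ne')
    have h1 : HasDerivAt (fun y : ℝ => f' (y ^ c)) (f'' (y ^ c) * (c * y ^ (c - 1))) y := by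
      exact hfa.comp y hra
    have h2 : HasDerivAt (fun y : ℝ => c * y ^ (c - 1)) (c * ((c - 1) * y ^ (c - 1 - 1))) y :=
      (Real.hasDerivAt_rpow_const (Or.inl hy.1.ne')).const_mul c
    exact h1.mul h2
  have hnn : ∀ y ∈ Ioo (0:ℝ) 1, 0 ≤ G'' y := by
    intro y hy
    have hu := hu_mem y hy
    set u := y ^ c with hu_def
    set A := y ^ (c - 1) with hA_def
    have hApos : 0 < A := Real.rpow_pos_of_pos hy.1 _
    have hupos : 0 < u := hu.1
    have hB : y ^ (c - 1 - 1) = A * A / u := by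
      rw [hA_def, hu_def, ← Real.rpow_add hy.1, ← Real.rpow_sub hy.1]
      ring_nf
    have hbr : 0 ≤ u * f'' u - ((j:ℝ) - 1) * f' u := hconv u (Set.Ioo_subset_Icc_self hu)
    have hkey : G'' y = (c * c * A * A / u) * (u * f'' u - ((j:ℝ) - 1) * f' u) := by
      have hc1 : c - 1 = -(c * ((j:ℝ) - 1)) := by linear_combination hcj
      rw [hG'']
      simp only [← hu_def, ← hA_def]
      rw [hB, hc1]
      field_simp
      ring
    rw [hkey]
    positivity
  refine convexOn_of_hasDerivWithinAt2_nonneg (convex_Icc 0 1) hgc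
    (f' := G') (f'' := G'') ?_ ?_ ?_
  · intro y hy
    rw [hint] at hy
    exact (hd1 y hy).hasDerivWithinAt
  · intro y hy
    rw [hint] at hy
    exact (hd2 y hy).hasDerivWithinAt
  · intro y hy
    rw [hint] at hy
    exact hnn y hy

lemma bp_sum (n : ℕ) (x : ℝ) : ∑ k ∈ Finset.range (n + 1), bp n k x = 1 := by
  rw [← binom_sum n x]
  exact Finset.sum_congr rfl fun k _ => by rw [bp]

theorem stmt8 (j n : ℕ) (hj : 2 ≤ j) (hn : j ≤ n) (f f' f'' : ℝ → ℝ)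
    (hf' : ∀ x ∈ Icc (0:ℝ) 1, HasDerivWithinAt f (f' x) (Icc 0 1) x)
    (hf'' : ∀ x ∈ Icc (0:ℝ) 1, HasDerivWithinAt f' (f'' x) (Icc 0 1) x)
    (hc : ContinuousOn f'' (Icc 0 1))
    (hpos : ∀ x ∈ Icc (0:ℝ) 1, 0 ≤ f' x)
    (hconv : ∀ x ∈ Icc (0:ℝ) 1, 0 ≤ x * f'' x - ((j : ℝ) - 1) * f' x) :
    ∀ x ∈ Icc (0:ℝ) 1, f x ≤ akr n j f x ∧ akr n j f x ≤ bern n f x := by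
  intro x hx
  have hj1 : 1 ≤ j := le_trans one_le_two hj
  have hn0 : (0:ℝ) < n := by
    have : 0 < n := lt_of_lt_of_le (lt_of_lt_of_le one_pos hj1) hn
    exact_mod_cast this
  have hj0ne : (j:ℝ) ≠ 0 := by
    have : (0:ℝ) < j := by exact_mod_cast lt_of_lt_of_le one_pos hj1
    exact this.ne'
  have hfc : ContinuousOn f (Icc 0 1) := fun y hy => (hf' y hy).continuousWithinAt
  have hmono : MonotoneOn f (Icc (0:ℝ) 1) := by
    refine monotoneOn_of_hasDerivWithinAt_nonneg (convex_Icc 0 1) hfc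
      (f' := f') ?_ ?_
    · exact fun y hy => (hf' y (interior_subset hy)).mono interior_subset
    · exact fun y hy => hpos y (interior_subset hy)
  constructor
  · -- f x ≤ akr
    have hcx := convex_g hj f f' f'' hf' hf'' hconv
    have h0 : ∀ k ∈ Finset.range (n + 1), 0 ≤ bp n k x := fun k _ => bp_nonneg hx
    have h1 : ∑ k ∈ Finset.range (n + 1), bp n k x = 1 := bp_sum n x
    have hmem : ∀ k ∈ Finset.range (n + 1), cnd n j k ∈ Icc (0:ℝ) 1 := fun k hk =>
      ⟨cnd_nonneg hn, cnd_le_one hn (by have := Finset.mem_range.1 hk; omega) hj1⟩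
    have hjen := hcx.map_sum_le h0 h1 hmem
    have hrep : ∑ k ∈ Finset.range (n + 1), bp n k x • cnd n j k = x ^ j := by
      simp only [smul_eq_mul]
      rw [← repro hn hj1 x]
      exact Finset.sum_congr rfl fun k _ => mul_comm _ _
    rw [hrep] at hjen
    have hgx : (x ^ j) ^ ((j:ℝ)⁻¹) = x := by
      rw [← Real.rpow_natCast x j, ← Real.rpow_mul hx.1, mul_inv_cancel₀ hj0ne, Real.rpow_one]
    calc f x = f ((x ^ j) ^ ((j:ℝ)⁻¹)) := by rw [hgx]
      _ ≤ ∑ k ∈ Finset.range (n + 1), bp n k x • f (cnd n j k ^ ((j:ℝ)⁻¹)) := hjen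
      _ = akr n j f x := by
          unfold akr
          exact Finset.sum_congr rfl fun k _ => by
            rw [smul_eq_mul, ← akrNode_eq, mul_comm]
  · -- akr ≤ bern
    unfold akr bern
    refine Finset.sum_le_sum fun k hk => ?_
    have hkn : k ≤ n := by have := Finset.mem_range.1 hk; omega
    have hknI : (k:ℝ)/n ∈ Icc (0:ℝ) 1 := by
      constructor
      · positivity
      · rw [div_le_one hn0]; exact_mod_cast hkn
    exact mul_le_mul_of_nonneg_right
      (hmono (akrNode_mem hn hkn hj1) hknI (akrNode_le hn hkn hj1)) (bp_nonneg hx)
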